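/- Let n, V, H be positive integers, E ∈ [−1,1]^{H×n} with columns e⁽ⁱ⁾, B ∈ ℝ^{V×H} with rows b_v, and ε_1,…,ε_V ≥ 0. Assume there exists X ∈ [−1,1]^{V×n} with ‖(1/n)·E·x_v − b_v‖_∞ ≤ ε_v for all v. Then the infimum over reconstructions X̃ ∈ (−1,1)^{V×n} of the supremum over X ∈ [−1,1]^{V×n} satisfying ‖(1/n)·E·x_v − b_v‖_∞ ≤ ε_v for all v ∈ {1,…,V} of the average cross-entropy loss (1/n)·Σ_{i=1}^n ℓ(x⁽ⁱ⁾, x̃⁽ⁱ⁾) equals (1/2)·Σ_{v=1}^V inf_{w ∈ ℝ^H} [ −b_vᵀw + (1/n)·Σ_{i=1}^n Ψ(wᵀe⁽ⁱ⁾) + ε_v·‖w‖₁ ]. -/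

import Mathlib

/-- The potential well `Ψ(m) = ln(1+eᵐ) + ln(1+e⁻ᵐ)`. -/
noncomputable def Psi (m : ℝ) : ℝ := Real.log (1 + Real.exp m) + Real.log (1 + Real.exp (-m))

/-- Cross-entropy reconstruction loss between `x ∈ [-1,1]^V` and `x̃ ∈ (-1,1)^V`. -/
noncomputable def xent {V : ℕ} (x xt : Fin V → ℝ) : ℝ :=
  ∑ v, ((1 + x v) / 2 * Real.log (2 / (1 + xt v)) + (1 - x v) / 2 * Real.log (2 / (1 - xt v)))

namespace MMX
open Real Set Finset

/-- entropy -/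
noncomputable def S (x : ℝ) : ℝ :=
  2 * Real.log 2 - (1 + x) * Real.log (1 + x) - (1 - x) * Real.log (1 - x)

noncomputable def ell (x xt : ℝ) : ℝ :=
  (1 + x) / 2 * Real.log (2 / (1 + xt)) + (1 - x) / 2 * Real.log (2 / (1 - xt))

lemma plogq (p q : ℝ) (hp : 0 ≤ p) (hq : 0 < q) : p * Real.log q ≤ p * Real.log p + q - p := by
  rcases eq_or_lt_of_le hp with h | h
  · simp [← h, hq.le]
  · have h1 : Real.log (q / p) ≤ q / p - 1 := Real.log_le_sub_one_of_pos (by positivity)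
    have h2 : Real.log (q / p) = Real.log q - Real.log p := Real.log_div hq.ne' h.ne'
    have := mul_le_mul_of_nonneg_left (h2 ▸ h1) hp
    have hqp : p * (q / p - 1) = q - p := by field_simp
    nlinarith [this]

lemma gibbs {x xt : ℝ} (hx : x ∈ Icc (-1:ℝ) 1) (hxt : xt ∈ Ioo (-1:ℝ) 1) :
    S x / 2 ≤ ell x xt := by
  obtain ⟨hx1, hx2⟩ := hx
  obtain ⟨ht1, ht2⟩ := hxt
  set p := (1 + x) / 2 with hpdef
  set p' := (1 - x) / 2 with hp'def
  set q := (1 + xt) / 2 with hqdef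
  set q' := (1 - xt) / 2 with hq'def
  have hp : 0 ≤ p := by simp [hpdef]; linarith
  have hp' : 0 ≤ p' := by simp [hp'def]; linarith
  have hq : 0 < q := by simp [hqdef]; linarith
  have hq' : 0 < q' := by simp [hq'def]; linarith
  have key1 := plogq p q hp hq
  have key2 := plogq p' q' hp' hq'
  -- rewrite ell
  have e1 : Real.log (2 / (1 + xt)) = - Real.log q := by
    rw [hqdef, Real.log_div (by norm_num) (by linarith), Real.log_div (by linarith) (by norm_num)]
    ring
  have e2 : Real.log (2 / (1 - xt)) = - Real.log q' := by
    rw [hq'def, Real.log_div (by norm_num) (by linarith), Real.log_div (by linarith) (by norm_num)]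
    ring
  have hell : ell x xt = -(p * Real.log q) - p' * Real.log q' := by
    rw [ell, e1, e2, hpdef, hp'def]; ring
  -- rewrite S
  have hS : S x = -(2 * (p * Real.log p)) - 2 * (p' * Real.log p') := by
    rcases eq_or_lt_of_le hp with h0 | h0
    · have hx' : x = -1 := by rw [hpdef] at h0; linarith [h0]
      subst hx'
      simp [S, hpdef, hp'def]
      norm_num
    · rcases eq_or_lt_of_le hp' with h0' | h0'
      · have hx' : x = 1 := by rw [hp'def] at h0'; linarith [h0']
        subst hx'
        simp [S, hpdef, hp'def]
        norm_num
      · have l1 : Real.log (1 + x) = Real.log 2 + Real.log p := by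
          rw [hpdef, Real.log_div (by linarith) (by norm_num)]
          have : (1:ℝ) + x ≠ 0 := by intro h; rw [hpdef] at h0; rw [h] at h0; simp at h0
          ring
        have l2 : Real.log (1 - x) = Real.log 2 + Real.log p' := by
          rw [hp'def, Real.log_div (by linarith) (by norm_num)]; ring
        rw [S, l1, l2, hpdef, hp'def]; ring
  rw [hell, hS]
  have hsum : q + q' = 1 := by rw [hqdef, hq'def]; ring
  have hsum' : p + p' = 1 := by rw [hpdef, hp'def]; ring
  nlinarith [key1, key2]


/-- tanh(m/2) -/
noncomputable def th (m : ℝ) : ℝ := (Real.exp m - 1) / (Real.exp m + 1)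

lemma th_mem (m : ℝ) : th m ∈ Ioo (-1:ℝ) 1 := by
  have h : 0 < Real.exp m + 1 := by positivity
  constructor
  · rw [th, lt_div_iff₀ h]; nlinarith [Real.exp_pos m]
  · rw [th, div_lt_iff₀ h]; nlinarith [Real.exp_pos m]

lemma one_add_th (m : ℝ) : 1 + th m = 2 * Real.exp m / (Real.exp m + 1) := by
  have h : Real.exp m + 1 ≠ 0 := by positivity
  rw [th]; field_simp; ring

lemma one_sub_th (m : ℝ) : 1 - th m = 2 / (Real.exp m + 1) := by
  have h : Real.exp m + 1 ≠ 0 := by positivity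
  rw [th]; field_simp; norm_num

lemma Psi_alt (m : ℝ) : Psi m = 2 * Real.log (1 + Real.exp m) - m := by
  have h1 : (0:ℝ) < 1 + Real.exp m := by positivity
  have : (1 + Real.exp (-m)) = Real.exp (-m) * (1 + Real.exp m) := by
    rw [Real.exp_neg]; have := Real.exp_pos m; field_simp; ring
  rw [Psi, this, Real.log_mul (by positivity) (by positivity), Real.log_exp]; ring

lemma Psi_eq (m : ℝ) : Psi m = m * th m + S (th m) := by
  have ha : (0:ℝ) < Real.exp m + 1 := by positivity
  have he : (0:ℝ) < Real.exp m := Real.exp_pos m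
  have l1 : Real.log (1 + th m) = Real.log 2 + m - Real.log (Real.exp m + 1) := by
    rw [one_add_th, Real.log_div (by positivity) (by positivity),
      Real.log_mul (by norm_num) he.ne', Real.log_exp]
  have l2 : Real.log (1 - th m) = Real.log 2 - Real.log (Real.exp m + 1) := by
    rw [one_sub_th, Real.log_div (by norm_num) ha.ne']
  have hc : Real.log (1 + Real.exp m) = Real.log (Real.exp m + 1) := by ring_nf
  rw [Psi_alt, S, l1, l2, hc]
  ring

lemma ell_th (x m : ℝ) : ell x (th m) = Psi m / 2 - x * m / 2 := by
  have ha : (0:ℝ) < Real.exp m + 1 := by positivity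
  have he : (0:ℝ) < Real.exp m := Real.exp_pos m
  have h1 : 2 / (1 + th m) = (Real.exp m + 1) / Real.exp m := by
    rw [one_add_th]; field_simp
  have h2 : 2 / (1 - th m) = Real.exp m + 1 := by
    rw [one_sub_th]; field_simp
  have l1 : Real.log (2 / (1 + th m)) = Real.log (Real.exp m + 1) - m := by
    rw [h1, Real.log_div ha.ne' he.ne', Real.log_exp]
  have l2 : Real.log (2 / (1 - th m)) = Real.log (Real.exp m + 1) := by rw [h2]
  have hc : Real.log (1 + Real.exp m) = Real.log (Real.exp m + 1) := by ring_nf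
  rw [ell, l1, l2, Psi_alt, hc]
  ring

lemma fenchel_young {x : ℝ} (hx : x ∈ Icc (-1:ℝ) 1) (m : ℝ) : S x ≤ Psi m - m * x := by
  have hg := gibbs hx (th_mem m)
  rw [ell_th] at hg
  linarith

lemma S_nonneg {x : ℝ} (hx : x ∈ Icc (-1:ℝ) 1) : 0 ≤ S x := by
  obtain ⟨h1, h2⟩ := hx
  have b1 : (1 + x) * Real.log (1 + x) ≤ (1 + x) * Real.log 2 := by
    rcases eq_or_lt_of_le (by linarith : (0:ℝ) ≤ 1 + x) with h | h
    · simp [← h]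
    · exact mul_le_mul_of_nonneg_left (Real.log_le_log h (by linarith)) (by linarith)
  have b2 : (1 - x) * Real.log (1 - x) ≤ (1 - x) * Real.log 2 := by
    rcases eq_or_lt_of_le (by linarith : (0:ℝ) ≤ 1 - x) with h | h
    · simp [← h]
    · exact mul_le_mul_of_nonneg_left (Real.log_le_log h (by linarith)) (by linarith)
  rw [S]; nlinarith

lemma ell_nonneg {x xt : ℝ} (hx : x ∈ Icc (-1:ℝ) 1) (hxt : xt ∈ Ioo (-1:ℝ) 1) :
    0 ≤ ell x xt := by
  obtain ⟨h1, h2⟩ := hx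
  obtain ⟨t1, t2⟩ := hxt
  have l1 : 0 ≤ Real.log (2 / (1 + xt)) := by
    apply Real.log_nonneg; rw [le_div_iff₀ (by linarith)]; linarith
  have l2 : 0 ≤ Real.log (2 / (1 - xt)) := by
    apply Real.log_nonneg; rw [le_div_iff₀ (by linarith)]; linarith
  rw [ell]
  exact add_nonneg (mul_nonneg (by linarith) l1) (mul_nonneg (by linarith) l2)

lemma ell_le {x xt : ℝ} (hx : x ∈ Icc (-1:ℝ) 1) (hxt : xt ∈ Ioo (-1:ℝ) 1) :
    ell x xt ≤ Real.log (2 / (1 + xt)) + Real.log (2 / (1 - xt)) := by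
  obtain ⟨h1, h2⟩ := hx
  obtain ⟨t1, t2⟩ := hxt
  have l1 : 0 ≤ Real.log (2 / (1 + xt)) := by
    apply Real.log_nonneg; rw [le_div_iff₀ (by linarith)]; linarith
  have l2 : 0 ≤ Real.log (2 / (1 - xt)) := by
    apply Real.log_nonneg; rw [le_div_iff₀ (by linarith)]; linarith
  rw [ell]
  have c1 : (1 + x) / 2 ≤ 1 := by linarith
  have c2 : (1 - x) / 2 ≤ 1 := by linarith
  nlinarith

lemma S_continuous : Continuous S := by
  have h : Continuous fun x : ℝ => x * Real.log x := Real.continuous_mul_log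
  have h1 : Continuous fun x : ℝ => (1 + x) * Real.log (1 + x) :=
    h.comp (continuous_const.add continuous_id)
  have h2 : Continuous fun x : ℝ => (1 - x) * Real.log (1 - x) :=
    h.comp (continuous_const.sub continuous_id)
  unfold S
  fun_prop

lemma mul_log_convex_combo {a b t1 t2 : ℝ} (ha : 0 ≤ a) (hb : 0 ≤ b) (hab : a + b = 1)
    (h1 : 0 ≤ t1) (h2 : 0 ≤ t2) :
    (a * t1 + b * t2) * Real.log (a * t1 + b * t2) ≤
      a * (t1 * Real.log t1) + b * (t2 * Real.log t2) := by
  have := Real.convexOn_mul_log.2 (Set.mem_Ici.2 h1) (Set.mem_Ici.2 h2) ha hb hab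
  simpa [smul_eq_mul] using this

lemma S_combo {a b x1 x2 : ℝ} (ha : 0 ≤ a) (hb : 0 ≤ b) (hab : a + b = 1)
    (h1 : x1 ∈ Icc (-1:ℝ) 1) (h2 : x2 ∈ Icc (-1:ℝ) 1) :
    a * S x1 + b * S x2 ≤ S (a * x1 + b * x2) := by
  obtain ⟨h11, h12⟩ := h1
  obtain ⟨h21, h22⟩ := h2
  have c1 := mul_log_convex_combo ha hb hab (by linarith : (0:ℝ) ≤ 1 + x1)
    (by linarith : (0:ℝ) ≤ 1 + x2)
  have c2 := mul_log_convex_combo ha hb hab (by linarith : (0:ℝ) ≤ 1 - x1)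
    (by linarith : (0:ℝ) ≤ 1 - x2)
  have e1 : a * (1 + x1) + b * (1 + x2) = 1 + (a * x1 + b * x2) := by
    nlinarith [hab]
  have e2 : a * (1 - x1) + b * (1 - x2) = 1 - (a * x1 + b * x2) := by
    nlinarith [hab]
  rw [e1] at c1
  rw [e2] at c2
  simp only [S]
  have hl : a * (2 * Real.log 2) + b * (2 * Real.log 2) = 2 * Real.log 2 := by
    rw [← add_mul, hab, one_mul]
  nlinarith [c1, c2, hl]

section PerV

variable {n H : ℕ}

/-- mean correlations -/
noncomputable def mu (E : Fin H → Fin n → ℝ) (x : Fin n → ℝ) (h : Fin H) : ℝ :=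
  (1 / (n : ℝ)) * ∑ i, E h i * x i

/-- scaled entropy objective -/
noncomputable def Phi (x : Fin n → ℝ) : ℝ := (1 / (2 * (n : ℝ))) * ∑ i, S (x i)

/-- dual objective -/
noncomputable def fd (E : Fin H → Fin n → ℝ) (c : Fin H → ℝ) (ε : ℝ) (w : Fin H → ℝ) : ℝ :=
  -(∑ h, c h * w h) + (1 / (n : ℝ)) * (∑ i, Psi (∑ h, w h * E h i)) + ε * ∑ h, |w h|

def box (x : Fin n → ℝ) : Prop := ∀ i, x i ∈ Icc (-1:ℝ) 1

def Kmem (E : Fin H → Fin n → ℝ) (c : Fin H → ℝ) (ε : ℝ) (x : Fin n → ℝ) : Prop :=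
  box x ∧ ∀ h, |mu E x h - c h| ≤ ε

lemma sum_swap_m (E : Fin H → Fin n → ℝ) (w : Fin H → ℝ) (x : Fin n → ℝ) :
    ∑ i, (∑ h, w h * E h i) * x i = ∑ h, w h * (∑ i, E h i * x i) := by
  have h1 : ∀ i : Fin n, (∑ h, w h * E h i) * x i = ∑ h, w h * (E h i * x i) := by
    intro i
    rw [Finset.sum_mul]
    exact Finset.sum_congr rfl fun h _ => by ring
  rw [Finset.sum_congr rfl fun i _ => h1 i, Finset.sum_comm]
  exact Finset.sum_congr rfl fun h _ => by rw [← Finset.mul_sum]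

lemma holder_step {E : Fin H → Fin n → ℝ} {c : Fin H → ℝ} {ε : ℝ} {x : Fin n → ℝ}
    (hx : ∀ h, |mu E x h - c h| ≤ ε) (w : Fin H → ℝ) :
    ∑ h, c h * w h - ∑ h, w h * mu E x h ≤ ε * ∑ h, |w h| := by
  rw [← Finset.sum_sub_distrib, Finset.mul_sum]
  apply Finset.sum_le_sum
  intro h _
  have h1 : c h * w h - w h * mu E x h = w h * (c h - mu E x h) := by ring
  rw [h1]
  calc w h * (c h - mu E x h) ≤ |w h * (c h - mu E x h)| := le_abs_self _
    _ = |w h| * |c h - mu E x h| := abs_mul _ _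
    _ ≤ |w h| * ε := by
        apply mul_le_mul_of_nonneg_left _ (abs_nonneg _)
        rw [abs_sub_comm]; exact hx h
    _ = ε * |w h| := mul_comm _ _

lemma weakA (hn : 0 < n) {E : Fin H → Fin n → ℝ} {c : Fin H → ℝ} {ε : ℝ}
    {x : Fin n → ℝ} (hx : ∀ h, |mu E x h - c h| ≤ ε) (w : Fin H → ℝ) :
    (1 / (2 * (n : ℝ))) * ∑ i, (Psi (∑ h, w h * E h i) - (∑ h, w h * E h i) * x i)
      ≤ fd E c ε w / 2 := by
  have hn' : (0:ℝ) < n := by exact_mod_cast hn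
  have hh := holder_step hx w
  have hswap := sum_swap_m E w x
  have hmu : ∀ h, ∑ i, E h i * x i = (n : ℝ) * mu E x h := by
    intro h; rw [mu]; field_simp
  have hswap2 : ∑ i, (∑ h, w h * E h i) * x i = (n:ℝ) * ∑ h, w h * mu E x h := by
    rw [hswap, Finset.mul_sum]
    exact Finset.sum_congr rfl fun h _ => by rw [hmu h]; ring
  rw [Finset.sum_sub_distrib, fd]
  rw [hswap2]
  have hPsi : (1 / (2 * (n : ℝ))) * ((n:ℝ) * ∑ h, w h * mu E x h)
      = (1/2) * ∑ h, w h * mu E x h := by field_simp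
  rw [mul_sub, hPsi]
  have e1 : (1 / (2 * (n:ℝ))) * ∑ i, Psi (∑ h, w h * E h i)
      = (1 / (n:ℝ)) * (∑ i, Psi (∑ h, w h * E h i)) / 2 := by ring
  linarith [hh]

lemma weakB (hn : 0 < n) {E : Fin H → Fin n → ℝ} {c : Fin H → ℝ} {ε : ℝ}
    {x : Fin n → ℝ} (hx : Kmem E c ε x) (w : Fin H → ℝ) :
    Phi x ≤ fd E c ε w / 2 := by
  refine le_trans ?_ (weakA hn hx.2 w)
  rw [Phi]
  apply mul_le_mul_of_nonneg_left _ (by positivity)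
  apply Finset.sum_le_sum
  intro i _
  exact fenchel_young (hx.1 i) _

lemma mu_continuous (E : Fin H → Fin n → ℝ) (h : Fin H) :
    Continuous fun x : Fin n → ℝ => mu E x h := by
  unfold mu; fun_prop

lemma Phi_continuous : Continuous fun x : Fin n → ℝ => Phi x := by
  unfold Phi
  exact continuous_const.mul (continuous_finset_sum _ fun i _ =>
    S_continuous.comp (continuous_apply i))

lemma box_eq_Icc : {x : Fin n → ℝ | box x} = Set.Icc (fun _ => (-1:ℝ)) (fun _ => 1) := by
  ext x
  simp [box, Set.mem_Icc, Pi.le_def, forall_and]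

lemma box_isCompact : IsCompact {x : Fin n → ℝ | box x} := by
  rw [box_eq_Icc]; exact isCompact_Icc

lemma Kmem_isCompact (E : Fin H → Fin n → ℝ) (c : Fin H → ℝ) (ε : ℝ) :
    IsCompact {x : Fin n → ℝ | Kmem E c ε x} := by
  apply IsCompact.of_isClosed_subset box_isCompact
  · have : {x : Fin n → ℝ | Kmem E c ε x}
        = {x : Fin n → ℝ | box x} ∩ ⋂ h, {x | |mu E x h - c h| ≤ ε} := by
      ext x; simp [Kmem, Set.mem_iInter]
    rw [this]
    apply IsClosed.inter
    · rw [box_eq_Icc]; exact isClosed_Icc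
    · apply isClosed_iInter
      intro h
      exact isClosed_le (((mu_continuous E h).sub continuous_const).abs) continuous_const
  · exact fun x hx => hx.1

lemma exists_maximizer {E : Fin H → Fin n → ℝ} {c : Fin H → ℝ} {ε : ℝ}
    (hfe : ∃ x, Kmem E c ε x) :
    ∃ xs, Kmem E c ε xs ∧ ∀ x, Kmem E c ε x → Phi x ≤ Phi xs := by
  obtain ⟨xs, hxs, hmax⟩ := (Kmem_isCompact E c ε).exists_isMaxOn hfe
    (Phi_continuous.continuousOn)
  exact ⟨xs, hxs, fun x hx => hmax hx⟩

lemma usc_max {E : Fin H → Fin n → ℝ} {c : Fin H → ℝ} {ε : ℝ} {xs : Fin n → ℝ}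
    (hmax : ∀ x, Kmem E c ε x → Phi x ≤ Phi xs) {δ : ℝ} (hδ : 0 < δ) :
    ∃ ρ > 0, ∀ x, box x → (∀ h, |mu E x h - c h| ≤ ε + ρ) → Phi x ≤ Phi xs + δ := by
  by_contra hcon
  push_neg at hcon
  have hstep : ∀ k : ℕ, ∃ x : Fin n → ℝ, box x ∧
      (∀ h, |mu E x h - c h| ≤ ε + 1 / (k + 1)) ∧ Phi xs + δ < Phi x := by
    intro k
    obtain ⟨x, hbx, hcn, hphi⟩ := hcon (1 / (k + 1)) (by positivity)
    exact ⟨x, hbx, hcn, hphi⟩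
  choose xx hbox hcns hphi using hstep
  obtain ⟨a, ha, φ, hφ, hconv⟩ := box_isCompact.tendsto_subseq (fun k => (by exact hbox k :
    xx k ∈ {x : Fin n → ℝ | box x}))
  have haK : Kmem E c ε a := by
    refine ⟨ha, fun h => ?_⟩
    have hc1 : Filter.Tendsto (fun k => |mu E (xx (φ k)) h - c h|) Filter.atTop
        (nhds (|mu E a h - c h|)) := by
      exact ((((mu_continuous E h).sub continuous_const).abs).continuousAt).tendsto.comp hconv
    have hc2 : Filter.Tendsto (fun k : ℕ => ε + 1 / ((k : ℝ) + 1)) Filter.atTop (nhds ε) := by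
      have := tendsto_one_div_add_atTop_nhds_zero_nat (𝕜 := ℝ)
      simpa using (this.const_add ε)
    refine le_of_tendsto_of_tendsto hc1 hc2 ?_
    filter_upwards with k
    calc |mu E (xx (φ k)) h - c h| ≤ ε + 1 / ((φ k : ℝ) + 1) := hcns (φ k) h
      _ ≤ ε + 1 / ((k : ℝ) + 1) := by
          have : (k : ℝ) + 1 ≤ (φ k : ℝ) + 1 := by
            have : k ≤ φ k := hφ.le_apply
            exact_mod_cast by omega
          gcongr
  have hPa : Phi xs + δ ≤ Phi a := by
    have : Filter.Tendsto (fun k => Phi (xx (φ k))) Filter.atTop (nhds (Phi a)) :=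
      (Phi_continuous.continuousAt).tendsto.comp hconv
    exact le_of_tendsto_of_tendsto tendsto_const_nhds this
      (by filter_upwards with k; exact (hphi (φ k)).le)
  have := hmax a haK
  linarith

/-- abbreviation for the separation space -/
local notation "G" => ((Fin H → ℝ) × (Fin H → ℝ) × ℝ)

lemma single_smul_one {H : ℕ} (h : Fin H) (r : ℝ) :
    r • (Pi.single h 1 : Fin H → ℝ) = Pi.single h r := by
  funext j
  by_cases hj : j = h
  · subst hj; simp
  · simp [Pi.single_apply, hj]

lemma lin_expand {H : ℕ} (f : ((Fin H → ℝ) × (Fin H → ℝ) × ℝ) →L[ℝ] ℝ)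
    (u v : Fin H → ℝ) (t : ℝ) :
    f (u, v, t) = (∑ h, u h * f (Pi.single h 1, 0, 0)) + (∑ h, v h * f (0, Pi.single h 1, 0))
      + t * f (0, 0, 1) := by
  have h1 : (u, v, t) = (u, 0, 0) + (0, v, 0) + ((0, 0, t) : (Fin H → ℝ) × (Fin H → ℝ) × ℝ) := by
    simp [Prod.ext_iff]
  rw [h1, map_add, map_add]
  have hu : ((u, 0, 0) : (Fin H → ℝ) × (Fin H → ℝ) × ℝ)
      = ∑ h, (u h) • ((Pi.single h 1, 0, 0) : (Fin H → ℝ) × (Fin H → ℝ) × ℝ) := by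
    rw [Prod.ext_iff]
    constructor
    · rw [Prod.fst_sum]
      simp only [Prod.smul_mk]
      rw [show (fun h => (u h) • (Pi.single h 1 : Fin H → ℝ)) = fun h => Pi.single h (u h) from
        funext fun h => single_smul_one h (u h)]
      exact (Finset.univ_sum_single u).symm
    · rw [Prod.ext_iff, Prod.snd_sum, Prod.fst_sum, Prod.snd_sum]
      constructor <;> simp
  have hv : ((0, v, 0) : (Fin H → ℝ) × (Fin H → ℝ) × ℝ)
      = ∑ h, (v h) • ((0, Pi.single h 1, 0) : (Fin H → ℝ) × (Fin H → ℝ) × ℝ) := by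
    rw [Prod.ext_iff]
    constructor
    · rw [Prod.fst_sum]; simp
    · rw [Prod.ext_iff, Prod.snd_sum, Prod.fst_sum, Prod.snd_sum]
      constructor
      · simp only [Prod.smul_mk]
        rw [show (fun h => (v h) • (Pi.single h 1 : Fin H → ℝ)) = fun h => Pi.single h (v h) from
          funext fun h => single_smul_one h (v h)]
        exact (Finset.univ_sum_single v).symm
      · simp
  have ht : ((0, 0, t) : (Fin H → ℝ) × (Fin H → ℝ) × ℝ)
      = t • ((0, 0, 1) : (Fin H → ℝ) × (Fin H → ℝ) × ℝ) := by
    simp [Prod.ext_iff]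
  rw [hu, hv, ht, map_sum, map_sum, map_smul]
  simp only [map_smul, smul_eq_mul]

lemma mu_combo {E : Fin H → Fin n → ℝ} (a b : ℝ) (x x' : Fin n → ℝ) (h : Fin H) :
    mu E (a • x + b • x') h = a * mu E x h + b * mu E x' h := by
  simp only [mu, Pi.add_apply, Pi.smul_apply, smul_eq_mul]
  have he : ∀ i : Fin n, E h i * (a * x i + b * x' i)
      = a * (E h i * x i) + b * (E h i * x' i) := fun i => by ring
  rw [Finset.sum_congr rfl fun i _ => he i, Finset.sum_add_distrib, ← Finset.mul_sum,
    ← Finset.mul_sum]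
  ring

lemma box_combo {a b : ℝ} (ha : 0 ≤ a) (hb : 0 ≤ b) (hab : a + b = 1)
    {x x' : Fin n → ℝ} (hx : box x) (hx' : box x') : box (a • x + b • x') := by
  intro i
  obtain ⟨h1, h2⟩ := hx i
  obtain ⟨h1', h2'⟩ := hx' i
  simp only [Pi.add_apply, Pi.smul_apply, smul_eq_mul]
  constructor <;> nlinarith

lemma Phi_combo {a b : ℝ} (ha : 0 ≤ a) (hb : 0 ≤ b) (hab : a + b = 1)
    {x x' : Fin n → ℝ} (hx : box x) (hx' : box x') :
    a * Phi x + b * Phi x' ≤ Phi (a • x + b • x') := by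
  simp only [Phi]
  have key : ∑ i, (a * S (x i) + b * S (x' i)) ≤ ∑ i, S ((a • x + b • x') i) := by
    apply Finset.sum_le_sum
    intro i _
    simp only [Pi.add_apply, Pi.smul_apply, smul_eq_mul]
    exact S_combo ha hb hab (hx i) (hx' i)
  rw [Finset.sum_add_distrib] at key
  have hc : (0:ℝ) ≤ 1 / (2 * (n:ℝ)) := by positivity
  calc a * ((1 / (2 * (n:ℝ))) * ∑ i, S (x i)) + b * ((1 / (2 * (n:ℝ))) * ∑ i, S (x' i))
      = (1 / (2 * (n:ℝ))) * (∑ i, a * S (x i) + ∑ i, b * S (x' i)) := by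
        rw [← Finset.mul_sum, ← Finset.mul_sum]; ring
    _ ≤ (1 / (2 * (n:ℝ))) * ∑ i, S ((a • x + b • x') i) := by
        apply mul_le_mul_of_nonneg_left _ hc
        exact key
    _ = _ := rfl

lemma slope_nonpos {A B q : ℝ} (key : ∀ s : ℝ, 0 ≤ s → A + s * q ≤ B) : q ≤ 0 := by
  by_contra hq
  push_neg at hq
  have h0 := key 0 le_rfl
  simp only [zero_mul, add_zero] at h0
  have h1 := key ((B - A + 1) / q) (div_nonneg (by linarith) hq.le)
  rw [div_mul_cancel₀ _ hq.ne'] at h1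
  linarith

/-- the perturbation set for separation -/
def Cset (E : Fin H → Fin n → ℝ) (c : Fin H → ℝ) (ε : ℝ) :
    Set ((Fin H → ℝ) × (Fin H → ℝ) × ℝ) :=
  {z | ∃ x, box x ∧ (∀ h, mu E x h - c h - ε ≤ z.1 h) ∧
    (∀ h, c h - mu E x h - ε ≤ z.2.1 h) ∧ z.2.2 ≤ Phi x}

lemma Cset_convex (E : Fin H → Fin n → ℝ) (c : Fin H → ℝ) (ε : ℝ) :
    Convex ℝ (Cset E c ε) := by
  rintro z ⟨x, hbx, h1, h2, h3⟩ z' ⟨x', hbx', h1', h2', h3'⟩ a b ha hb hab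
  refine ⟨a • x + b • x', box_combo ha hb hab hbx hbx', ?_, ?_, ?_⟩
  · intro h
    rw [mu_combo]
    have k1 := mul_le_mul_of_nonneg_left (h1 h) ha
    have k2 := mul_le_mul_of_nonneg_left (h1' h) hb
    have : (a • z + b • z').1 h = a * z.1 h + b * z'.1 h := rfl
    rw [this]
    have hcc : a * (c h + ε) + b * (c h + ε) = c h + ε := by rw [← add_mul, hab, one_mul]
    linarith [k1, k2, hcc]
  · intro h
    rw [mu_combo]
    have k1 := mul_le_mul_of_nonneg_left (h2 h) ha
    have k2 := mul_le_mul_of_nonneg_left (h2' h) hb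
    have : (a • z + b • z').2.1 h = a * z.2.1 h + b * z'.2.1 h := rfl
    rw [this]
    have hcc : a * (c h - ε) + b * (c h - ε) = c h - ε := by rw [← add_mul, hab, one_mul]
    linarith [k1, k2, hcc]
  · have : (a • z + b • z').2.2 = a * z.2.2 + b * z'.2.2 := rfl
    rw [this]
    have k1 := mul_le_mul_of_nonneg_left h3 ha
    have k2 := mul_le_mul_of_nonneg_left h3' hb
    have := Phi_combo ha hb hab hbx hbx'
    linarith

lemma multipliers (hn : 0 < n) {E : Fin H → Fin n → ℝ} {c : Fin H → ℝ} {ε : ℝ}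
    {xh : Fin n → ℝ} (hxh : Kmem E c ε xh) {xs : Fin n → ℝ}
    (hmax : ∀ x, Kmem E c ε x → Phi x ≤ Phi xs) {δ : ℝ} (hδ : 0 < δ) :
    ∃ lp lm : Fin H → ℝ, (∀ h, 0 ≤ lp h) ∧ (∀ h, 0 ≤ lm h) ∧
      ∀ x, box x → Phi x ≤ Phi xs + δ +
        (∑ h, lp h * (mu E x h - c h - ε)) + (∑ h, lm h * (c h - mu E x h - ε)) := by
  obtain ⟨ρ, hρ, husc⟩ := usc_max hmax (half_pos hδ)
  have hxh2 : ∀ h, mu E xh h - c h - ε ≤ 0 := fun h => by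
    have := (abs_le.mp (hxh.2 h)).2; linarith
  have hxh2' : ∀ h, c h - mu E xh h - ε ≤ 0 := fun h => by
    have := (abs_le.mp (hxh.2 h)).1; linarith
  set zc : (Fin H → ℝ) × (Fin H → ℝ) × ℝ := ((fun _ => ρ), (fun _ => ρ), Phi xh - 1) with hzc
  set r : ℝ := min ρ 1 / 2 with hr
  have hrpos : 0 < r := by rw [hr]; have := lt_min hρ one_pos; positivity
  have hrρ : r ≤ ρ / 2 := by rw [hr]; have := min_le_left ρ 1; linarith
  have hr1 : r ≤ 1 / 2 := by rw [hr]; have := min_le_right ρ 1; linarith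
  have hball : Metric.ball zc r ⊆ Cset E c ε := by
    intro z hz
    rw [Metric.mem_ball] at hz
    have hd1 : ∀ h, |z.1 h - ρ| < r := by
      intro h
      calc |z.1 h - ρ| = dist (z.1 h) (zc.1 h) := by rw [Real.dist_eq, hzc]
        _ ≤ dist z.1 zc.1 := dist_le_pi_dist z.1 zc.1 h
        _ ≤ dist z zc := le_trans (le_max_left _ _) (le_of_eq Prod.dist_eq.symm)
        _ < r := hz
    have hd2 : ∀ h, |z.2.1 h - ρ| < r := by
      intro h
      calc |z.2.1 h - ρ| = dist (z.2.1 h) (zc.2.1 h) := by rw [Real.dist_eq, hzc]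
        _ ≤ dist z.2.1 zc.2.1 := dist_le_pi_dist z.2.1 zc.2.1 h
        _ ≤ dist z.2 zc.2 := le_trans (le_max_left _ _) (le_of_eq Prod.dist_eq.symm)
        _ ≤ dist z zc := le_trans (le_max_right _ _) (le_of_eq Prod.dist_eq.symm)
        _ < r := hz
    have hd3 : |z.2.2 - (Phi xh - 1)| < r := by
      calc |z.2.2 - (Phi xh - 1)| = dist z.2.2 zc.2.2 := by rw [Real.dist_eq, hzc]
        _ ≤ dist z.2 zc.2 := le_trans (le_max_right _ _) (le_of_eq Prod.dist_eq.symm)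
        _ ≤ dist z zc := le_trans (le_max_right _ _) (le_of_eq Prod.dist_eq.symm)
        _ < r := hz
    refine ⟨xh, hxh.1, fun h => ?_, fun h => ?_, ?_⟩
    · have := (abs_lt.mp (hd1 h)).1
      have := hxh2 h
      linarith
    · have := (abs_lt.mp (hd2 h)).1
      have := hxh2' h
      linarith
    · have := (abs_lt.mp hd3).2
      linarith
  have hzcint : zc ∈ interior (Cset E c ε) :=
    mem_interior.mpr ⟨Metric.ball zc r, hball, Metric.isOpen_ball, Metric.mem_ball_self hrpos⟩
  set p : (Fin H → ℝ) × (Fin H → ℝ) × ℝ := ((fun _ => ρ), (fun _ => ρ), Phi xs + δ) with hp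
  have hpC : p ∉ Cset E c ε := by
    rintro ⟨x, hbx, h1, h2, h3⟩
    have hcn : ∀ h, |mu E x h - c h| ≤ ε + ρ := by
      intro h
      have := h1 h; have := h2 h
      rw [abs_le]
      constructor <;> simp only [hp] at * <;> linarith
    have := husc x hbx hcn
    have h3' : Phi xs + δ ≤ Phi x := h3
    linarith
  have hpint : p ∉ interior (Cset E c ε) := fun hq => hpC (interior_subset hq)
  obtain ⟨f, hf⟩ := geometric_hahn_banach_open_point
    ((Cset_convex E c ε).interior) isOpen_interior hpint
  -- extend separation to all of C
  have hfC : ∀ z ∈ Cset E c ε, f z ≤ f p := by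
    intro z hzC
    by_contra hgt
    push_neg at hgt
    set M : ℝ := |f zc - f z| with hM
    set d : ℝ := f z - f p with hd
    have hdpos : 0 < d := by rw [hd]; linarith
    have hMnn : 0 ≤ M := abs_nonneg _
    set t : ℝ := min (1/2) (d / (2 * (M + 1))) with ht
    have ht0 : 0 < t := lt_min (by norm_num) (by positivity)
    have ht1 : t ≤ 1/2 := min_le_left _ _
    have ht2 : t ≤ d / (2 * (M + 1)) := min_le_right _ _
    have hcombo : (1 - t) • z + t • zc ∈ interior (Cset E c ε) :=
      (Cset_convex E c ε).combo_closure_interior_mem_interior (subset_closure hzC) hzcint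
        (by linarith) ht0 (by ring)
    have hlt := hf _ hcombo
    rw [map_add, map_smul, map_smul] at hlt
    simp only [smul_eq_mul] at hlt
    have habs : t * (f z - f zc) ≤ t * M := by
      apply mul_le_mul_of_nonneg_left _ ht0.le
      rw [hM, abs_sub_comm]
      exact le_abs_self _
    have hfrac : (d / (2 * (M + 1))) * M ≤ d / 2 := by
      rw [div_mul_eq_mul_div, div_le_div_iff₀ (by positivity) (by norm_num)]
      nlinarith
    have htM : t * M ≤ d / 2 :=
      le_trans (mul_le_mul_of_nonneg_right ht2 hMnn) hfrac
    nlinarith [hlt, habs, htM, hdpos]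
  -- coefficients
  set aP : Fin H → ℝ := fun h => f (Pi.single h 1, 0, 0) with haPd
  set aM : Fin H → ℝ := fun h => f (0, Pi.single h 1, 0) with haMd
  set μc : ℝ := f (0, 0, 1) with hμcd
  have hexp : ∀ (u v : Fin H → ℝ) (t : ℝ),
      f (u, v, t) = (∑ h, u h * aP h) + (∑ h, v h * aM h) + t * μc := fun u v t =>
    lin_expand f u v t
  have hfp : f p = (∑ h, ρ * aP h) + (∑ h, ρ * aM h) + (Phi xs + δ) * μc := hexp _ _ _
  -- sign facts
  have hμ0 : 0 ≤ μc := by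
    have key : ∀ s : ℝ, 0 ≤ s →
        ((∑ h, ρ * aP h) + (∑ h, ρ * aM h) + (Phi xh - 1) * μc) + s * (-μc) ≤ f p := by
      intro s hs
      have hmem : (((fun _ => ρ), (fun _ => ρ), Phi xh - 1 - s) :
          (Fin H → ℝ) × (Fin H → ℝ) × ℝ) ∈ Cset E c ε := by
        refine ⟨xh, hxh.1, fun h => ?_, fun h => ?_, ?_⟩
        · have := hxh2 h; exact le_trans this hρ.le
        · have := hxh2' h; exact le_trans this hρ.le
        · simp only []; linarith
      have := hfC _ hmem
      rw [hexp] at this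
      calc _ = (∑ h, ρ * aP h) + (∑ h, ρ * aM h) + (Phi xh - 1 - s) * μc := by ring
        _ ≤ f p := this
    have := slope_nonpos key
    linarith
  have haP : ∀ h, aP h ≤ 0 := by
    intro h
    apply slope_nonpos (A := (∑ h, ρ * aP h) + (∑ h, ρ * aM h) + (Phi xh - 1) * μc) (B := f p)
    intro s hs
    have hmem : (((fun h' => ρ + s * (Pi.single h 1 : Fin H → ℝ) h'), (fun _ => ρ), Phi xh - 1) :
        (Fin H → ℝ) × (Fin H → ℝ) × ℝ) ∈ Cset E c ε := by
      refine ⟨xh, hxh.1, fun h' => ?_, fun h' => ?_, ?_⟩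
      · have h1 := hxh2 h'
        have h2 : 0 ≤ s * (Pi.single h 1 : Fin H → ℝ) h' := by
          apply mul_nonneg hs
          by_cases hh : h' = h <;> simp [Pi.single_apply, hh]
        calc mu E xh h' - c h' - ε ≤ 0 := h1
          _ ≤ ρ + s * (Pi.single h 1 : Fin H → ℝ) h' := by linarith
      · have := hxh2' h'; exact le_trans this hρ.le
      · simp only []; linarith
    have hle := hfC _ hmem
    rw [hexp] at hle
    have hsum : ∑ h', (ρ + s * (Pi.single h 1 : Fin H → ℝ) h') * aP h'
        = (∑ h', ρ * aP h') + s * aP h := by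
      have : ∀ h', (ρ + s * (Pi.single h 1 : Fin H → ℝ) h') * aP h'
          = ρ * aP h' + s * ((Pi.single h 1 : Fin H → ℝ) h' * aP h') := fun h' => by ring
      rw [Finset.sum_congr rfl fun h' _ => this h', Finset.sum_add_distrib, ← Finset.mul_sum]
      congr 1
      congr 1
      simp [Pi.single_apply]
    rw [hsum] at hle
    calc _ = ((∑ h', ρ * aP h') + s * aP h) + (∑ h', ρ * aM h') + (Phi xh - 1) * μc := by ring
      _ ≤ f p := hle
  have haM : ∀ h, aM h ≤ 0 := by
    intro h
    apply slope_nonpos (A := (∑ h, ρ * aP h) + (∑ h, ρ * aM h) + (Phi xh - 1) * μc) (B := f p)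
    intro s hs
    have hmem : (((fun _ => ρ), (fun h' => ρ + s * (Pi.single h 1 : Fin H → ℝ) h'), Phi xh - 1) :
        (Fin H → ℝ) × (Fin H → ℝ) × ℝ) ∈ Cset E c ε := by
      refine ⟨xh, hxh.1, fun h' => ?_, fun h' => ?_, ?_⟩
      · have := hxh2 h'; exact le_trans this hρ.le
      · have h1 := hxh2' h'
        have h2 : 0 ≤ s * (Pi.single h 1 : Fin H → ℝ) h' := by
          apply mul_nonneg hs
          by_cases hh : h' = h <;> simp [Pi.single_apply, hh]
        calc c h' - mu E xh h' - ε ≤ 0 := h1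
          _ ≤ ρ + s * (Pi.single h 1 : Fin H → ℝ) h' := by linarith
      · simp only []; linarith
    have hle := hfC _ hmem
    rw [hexp] at hle
    have hsum : ∑ h', (ρ + s * (Pi.single h 1 : Fin H → ℝ) h') * aM h'
        = (∑ h', ρ * aM h') + s * aM h := by
      have : ∀ h', (ρ + s * (Pi.single h 1 : Fin H → ℝ) h') * aM h'
          = ρ * aM h' + s * ((Pi.single h 1 : Fin H → ℝ) h' * aM h') := fun h' => by ring
      rw [Finset.sum_congr rfl fun h' _ => this h', Finset.sum_add_distrib, ← Finset.mul_sum]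
      congr 1
      congr 1
      simp [Pi.single_apply]
    rw [hsum] at hle
    calc _ = (∑ h', ρ * aP h') + ((∑ h', ρ * aM h') + s * aM h) + (Phi xh - 1) * μc := by ring
      _ ≤ f p := hle
  have hμpos : 0 < μc := by
    rcases lt_or_eq_of_le hμ0 with h | h
    · exact h
    · exfalso
      have hlt := hf zc hzcint
      have hzc1 : f zc = (∑ h, ρ * aP h) + (∑ h, ρ * aM h) + (Phi xh - 1) * μc := hexp _ _ _
      rw [hzc1, hfp, ← h] at hlt
      simp at hlt
  -- conclusion
  have hμne : μc ≠ 0 := hμpos.ne'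
  refine ⟨fun h => -aP h / μc, fun h => -aM h / μc,
    fun h => div_nonneg (by linarith [haP h]) hμpos.le,
    fun h => div_nonneg (by linarith [haM h]) hμpos.le, ?_⟩
  intro x hbx
  have hmem : ((fun h => mu E x h - c h - ε, fun h => c h - mu E x h - ε, Phi x) :
      (Fin H → ℝ) × (Fin H → ℝ) × ℝ) ∈ Cset E c ε :=
    ⟨x, hbx, fun h => le_refl _, fun h => le_refl _, le_refl _⟩
  have hle := hfC _ hmem
  rw [hexp, hfp] at hle
  have hnp1 : (∑ h, ρ * aP h) ≤ 0 :=
    Finset.sum_nonpos fun h _ => mul_nonpos_of_nonneg_of_nonpos hρ.le (haP h)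
  have hnp2 : (∑ h, ρ * aM h) ≤ 0 :=
    Finset.sum_nonpos fun h _ => mul_nonpos_of_nonneg_of_nonpos hρ.le (haM h)
  have e1 : (∑ h, -aP h / μc * (mu E x h - c h - ε)) * μc
      = -(∑ h, (mu E x h - c h - ε) * aP h) := by
    rw [Finset.sum_mul, ← Finset.sum_neg_distrib]
    apply Finset.sum_congr rfl
    intro h _
    field_simp
  have e2 : (∑ h, -aM h / μc * (c h - mu E x h - ε)) * μc
      = -(∑ h, (c h - mu E x h - ε) * aM h) := by
    rw [Finset.sum_mul, ← Finset.sum_neg_distrib]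
    apply Finset.sum_congr rfl
    intro h _
    field_simp
  rw [← mul_le_mul_iff_of_pos_right hμpos]
  nlinarith [hle, hnp1, hnp2, e1, e2]

lemma strong_dual (hn : 0 < n) {E : Fin H → Fin n → ℝ} {c : Fin H → ℝ} {ε : ℝ} (hε : 0 ≤ ε)
    {xh : Fin n → ℝ} (hxh : Kmem E c ε xh) {xs : Fin n → ℝ}
    (hmax : ∀ x, Kmem E c ε x → Phi x ≤ Phi xs) {δ : ℝ} (hδ : 0 < δ) :
    ∃ w : Fin H → ℝ, fd E c ε w ≤ 2 * Phi xs + 2 * δ := by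
  obtain ⟨lp, lm, hlp, hlm, hkey⟩ := multipliers hn hxh hmax hδ
  set w : Fin H → ℝ := fun h => 2 * (lm h - lp h) with hw
  set m : Fin n → ℝ := fun i => ∑ h, w h * E h i with hm
  set x0 : Fin n → ℝ := fun i => th (m i) with hx0
  have hbx0 : box x0 := fun i => ⟨(th_mem (m i)).1.le, (th_mem (m i)).2.le⟩
  refine ⟨w, ?_⟩
  have hn' : (0:ℝ) < n := by exact_mod_cast hn
  -- rewrite fd at w
  have hPsiSum : ∑ i, Psi (∑ h, w h * E h i) = (∑ i, (∑ h, w h * E h i) * x0 i)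
      + ∑ i, S (x0 i) := by
    rw [← Finset.sum_add_distrib]
    apply Finset.sum_congr rfl
    intro i _
    have : x0 i = th (∑ h, w h * E h i) := rfl
    rw [this]
    exact Psi_eq _
  have hswap2 : (1/(n:ℝ)) * ∑ i, (∑ h, w h * E h i) * x0 i = ∑ h, w h * mu E x0 h := by
    rw [sum_swap_m, Finset.mul_sum]
    apply Finset.sum_congr rfl
    intro h _
    rw [mu]
    ring
  have hfd : fd E c ε w = 2 * Phi x0 + (∑ h, w h * (mu E x0 h - c h)) + ε * ∑ h, |w h| := by
    rw [fd, hPsiSum, mul_add, hswap2, Phi]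
    have h1 : 2 * ((1 / (2 * (n:ℝ))) * ∑ i, S (x0 i)) = (1/(n:ℝ)) * ∑ i, S (x0 i) := by
      field_simp
    have h2 : ∑ h, w h * (mu E x0 h - c h) = (∑ h, w h * mu E x0 h) - ∑ h, c h * w h := by
      rw [← Finset.sum_sub_distrib]
      exact Finset.sum_congr rfl fun h _ => by ring
    rw [h1] at *
    rw [h2]
    ring
  have hperh : ∀ h, 2 * (lp h * (mu E x0 h - c h - ε)) + 2 * (lm h * (c h - mu E x0 h - ε))
      + w h * (mu E x0 h - c h) + ε * |w h| ≤ 0 := by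
    intro h
    have h1 := hlp h
    have h2 := hlm h
    have habs : |2 * (lm h - lp h)| ≤ 2 * (lp h + lm h) :=
      abs_le.mpr ⟨by linarith, by linarith⟩
    have hmm := mul_le_mul_of_nonneg_left habs hε
    simp only [hw]
    nlinarith [hmm]
  have htail : 2 * (∑ h, lp h * (mu E x0 h - c h - ε))
      + 2 * (∑ h, lm h * (c h - mu E x0 h - ε))
      + (∑ h, w h * (mu E x0 h - c h)) + ε * ∑ h, |w h| ≤ 0 := by
    have hs : ∑ h, (2 * (lp h * (mu E x0 h - c h - ε)) + 2 * (lm h * (c h - mu E x0 h - ε))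
        + w h * (mu E x0 h - c h) + ε * |w h|) ≤ 0 :=
      Finset.sum_nonpos fun h _ => hperh h
    have he : ∑ h, (2 * (lp h * (mu E x0 h - c h - ε)) + 2 * (lm h * (c h - mu E x0 h - ε))
        + w h * (mu E x0 h - c h) + ε * |w h|)
        = 2 * (∑ h, lp h * (mu E x0 h - c h - ε)) + 2 * (∑ h, lm h * (c h - mu E x0 h - ε))
        + (∑ h, w h * (mu E x0 h - c h)) + ε * ∑ h, |w h| := by
      rw [Finset.mul_sum, Finset.mul_sum, Finset.mul_sum, ← Finset.sum_add_distrib,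
        ← Finset.sum_add_distrib, ← Finset.sum_add_distrib]
    rw [he] at hs
    exact hs
  have hk := hkey x0 hbx0
  rw [hfd]
  linarith [hk, htail]

lemma Phi_nonneg {x : Fin n → ℝ} (hx : box x) : 0 ≤ Phi x :=
  mul_nonneg (by positivity) (Finset.sum_nonneg fun i _ => S_nonneg (hx i))

lemma fd_bddBelow (hn : 0 < n) {E : Fin H → Fin n → ℝ} {c : Fin H → ℝ} {ε : ℝ}
    {xh : Fin n → ℝ} (hxh : Kmem E c ε xh) :
    BddBelow (Set.range (fd E c ε)) := by
  refine ⟨0, ?_⟩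
  rintro y ⟨w, rfl⟩
  have h1 := weakB hn hxh w
  have h2 := Phi_nonneg hxh.1
  linarith

lemma iInf_fd_eq (hn : 0 < n) {E : Fin H → Fin n → ℝ} {c : Fin H → ℝ} {ε : ℝ} (hε : 0 ≤ ε)
    {xh : Fin n → ℝ} (hxh : Kmem E c ε xh) {xs : Fin n → ℝ} (hxsK : Kmem E c ε xs)
    (hmax : ∀ x, Kmem E c ε x → Phi x ≤ Phi xs) :
    (⨅ w : Fin H → ℝ, fd E c ε w) = 2 * Phi xs := by
  apply le_antisymm
  · apply le_of_forall_pos_le_add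
    intro e he
    obtain ⟨w, hw⟩ := strong_dual hn hε hxh hmax (half_pos he)
    calc (⨅ w : Fin H → ℝ, fd E c ε w) ≤ fd E c ε w := ciInf_le (fd_bddBelow hn hxh) w
      _ ≤ 2 * Phi xs + 2 * (e / 2) := hw
      _ = 2 * Phi xs + e := by ring
  · apply le_ciInf
    intro w
    have := weakB hn hxsK w
    linarith

end PerV

end MMX

set_option maxHeartbeats 1000000 in
/-- With `L∞`-relaxed correlation constraints `‖(1/n)·E·x_v - b_v‖_∞ ≤ ε_v`, the minimax
value equals the bitwise minimized slack function with `L1` weight regularization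
`ε_v·‖w‖₁`. -/
theorem minimax_relaxed_constraints_l1_regularization
    (n V H : ℕ) (hn : 0 < n) (hV : 0 < V) (hH : 0 < H)
    (E : Fin H → Fin n → ℝ) (hE : ∀ h i, E h i ∈ Set.Icc (-1 : ℝ) 1)
    (B : Fin V → Fin H → ℝ)
    (eps : Fin V → ℝ) (heps : ∀ v, 0 ≤ eps v)
    (hfeas : ∃ X : Fin V → Fin n → ℝ,
      (∀ v i, X v i ∈ Set.Icc (-1 : ℝ) 1) ∧
      ∀ v h, |(1 / (n : ℝ)) * (∑ i, E h i * X v i) - B v h| ≤ eps v) :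
    (⨅ Xt : {Xt : Fin V → Fin n → ℝ // ∀ v i, Xt v i ∈ Set.Ioo (-1 : ℝ) 1},
      ⨆ X : {X : Fin V → Fin n → ℝ //
          (∀ v i, X v i ∈ Set.Icc (-1 : ℝ) 1) ∧
          ∀ v h, |(1 / (n : ℝ)) * (∑ i, E h i * X v i) - B v h| ≤ eps v},
        (1 / (n : ℝ)) * ∑ i, xent (fun v => X.1 v i) (fun v => Xt.1 v i))
      = (1 / 2) * ∑ v, ⨅ w : Fin H → ℝ,
          (-(∑ h, B v h * w h) + (1 / (n : ℝ)) * (∑ i, Psi (∑ h, w h * E h i))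
            + eps v * ∑ h, |w h|) := by
  classical
  obtain ⟨Xh, hXhbox, hXhcon⟩ := hfeas
  have hKfe : ∀ v, MMX.Kmem E (B v) (eps v) (Xh v) :=
    fun v => ⟨fun i => hXhbox v i, fun h => hXhcon v h⟩
  choose xs hxsK hxsmax using fun v => MMX.exists_maximizer ⟨Xh v, hKfe v⟩
  -- subtype instances
  haveI hXtne : Nonempty {Xt : Fin V → Fin n → ℝ // ∀ v i, Xt v i ∈ Set.Ioo (-1 : ℝ) 1} :=
    ⟨⟨fun _ _ => 0, fun v i => ⟨by norm_num, by norm_num⟩⟩⟩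
  haveI hXne : Nonempty {X : Fin V → Fin n → ℝ //
      (∀ v i, X v i ∈ Set.Icc (-1 : ℝ) 1) ∧
      ∀ v h, |(1 / (n : ℝ)) * (∑ i, E h i * X v i) - B v h| ≤ eps v} :=
    ⟨⟨Xh, hXhbox, hXhcon⟩⟩
  -- objective rewriting
  have obj_eq : ∀ (X Xt : Fin V → Fin n → ℝ),
      (1/(n:ℝ)) * ∑ i, xent (fun v => X v i) (fun v => Xt v i)
        = ∑ v, (1/(n:ℝ)) * ∑ i, MMX.ell (X v i) (Xt v i) := by
    intro X Xt
    have h1 : ∀ i : Fin n, xent (fun v => X v i) (fun v => Xt v i)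
        = ∑ v, MMX.ell (X v i) (Xt v i) := fun i => rfl
    rw [Finset.sum_congr rfl fun i _ => h1 i, Finset.sum_comm, Finset.mul_sum]
  -- each X in the subtype is per-v feasible
  have hXfeas : ∀ (X : {X : Fin V → Fin n → ℝ //
      (∀ v i, X v i ∈ Set.Icc (-1 : ℝ) 1) ∧
      ∀ v h, |(1 / (n : ℝ)) * (∑ i, E h i * X v i) - B v h| ≤ eps v}) (v : Fin V),
      MMX.Kmem E (B v) (eps v) (X.1 v) :=
    fun X v => ⟨fun i => X.2.1 v i, fun h => X.2.2 v h⟩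
  -- RHS identification
  have hRHS : (1 / 2 : ℝ) * ∑ v, (⨅ w : Fin H → ℝ,
      (-(∑ h, B v h * w h) + (1 / (n : ℝ)) * (∑ i, Psi (∑ h, w h * E h i))
        + eps v * ∑ h, |w h|)) = ∑ v, MMX.Phi (xs v) := by
    have h1 : ∀ v, (⨅ w : Fin H → ℝ,
        (-(∑ h, B v h * w h) + (1 / (n : ℝ)) * (∑ i, Psi (∑ h, w h * E h i))
          + eps v * ∑ h, |w h|)) = 2 * MMX.Phi (xs v) := by
      intro v
      exact MMX.iInf_fd_eq hn (heps v) (hKfe v) (hxsK v) (hxsmax v)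
    rw [Finset.sum_congr rfl fun v _ => h1 v, ← Finset.mul_sum]
    ring
  rw [hRHS]
  -- boundedness of sup for fixed Xt
  have hbddA : ∀ (Xt : {Xt : Fin V → Fin n → ℝ // ∀ v i, Xt v i ∈ Set.Ioo (-1 : ℝ) 1}),
      ∀ (X : {X : Fin V → Fin n → ℝ //
        (∀ v i, X v i ∈ Set.Icc (-1 : ℝ) 1) ∧
        ∀ v h, |(1 / (n : ℝ)) * (∑ i, E h i * X v i) - B v h| ≤ eps v}),
      (1/(n:ℝ)) * ∑ i, xent (fun v => X.1 v i) (fun v => Xt.1 v i)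
        ≤ ∑ v, (1/(n:ℝ)) * ∑ i, (Real.log (2 / (1 + Xt.1 v i))
          + Real.log (2 / (1 - Xt.1 v i))) := by
    intro Xt X
    rw [obj_eq]
    apply Finset.sum_le_sum
    intro v _
    apply mul_le_mul_of_nonneg_left _ (by positivity)
    apply Finset.sum_le_sum
    intro i _
    exact MMX.ell_le (X.2.1 v i) (Xt.2 v i)
  have hBdd : ∀ (Xt : {Xt : Fin V → Fin n → ℝ // ∀ v i, Xt v i ∈ Set.Ioo (-1 : ℝ) 1}),
      BddAbove (Set.range (fun (X : {X : Fin V → Fin n → ℝ //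
        (∀ v i, X v i ∈ Set.Icc (-1 : ℝ) 1) ∧
        ∀ v h, |(1 / (n : ℝ)) * (∑ i, E h i * X v i) - B v h| ≤ eps v}) =>
        (1/(n:ℝ)) * ∑ i, xent (fun v => X.1 v i) (fun v => Xt.1 v i))) := by
    intro Xt
    refine ⟨∑ v, (1/(n:ℝ)) * ∑ i, (Real.log (2 / (1 + Xt.1 v i))
      + Real.log (2 / (1 - Xt.1 v i))), ?_⟩
    rintro y ⟨X, rfl⟩
    exact hbddA Xt X
  apply le_antisymm
  · -- LHS ≤ ∑ Phi xs
    apply le_of_forall_pos_le_add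
    intro e he
    have hV' : (0:ℝ) < V := by exact_mod_cast hV
    have hd : 0 < e / (2 * V) := by positivity
    choose w hw using fun v => MMX.strong_dual hn (heps v) (hKfe v) (hxsmax v) hd
    set Xt0 : {Xt : Fin V → Fin n → ℝ // ∀ v i, Xt v i ∈ Set.Ioo (-1 : ℝ) 1} :=
      ⟨fun v i => MMX.th (∑ h, w v h * E h i), fun v i => MMX.th_mem _⟩ with hXt0
    refine le_trans (ciInf_le ?_ Xt0) ?_
    · -- BddBelow of the infimum family
      refine ⟨0, ?_⟩
      rintro y ⟨Xt, rfl⟩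
      have h0 : (0:ℝ) ≤ (1/(n:ℝ)) * ∑ i, xent (fun v => (Xh : Fin V → Fin n → ℝ) v i)
          (fun v => Xt.1 v i) := by
        rw [obj_eq]
        apply Finset.sum_nonneg
        intro v _
        apply mul_nonneg (by positivity)
        apply Finset.sum_nonneg
        intro i _
        exact MMX.ell_nonneg (hXhbox v i) (Xt.2 v i)
      calc (0:ℝ) ≤ _ := h0
        _ ≤ _ := le_ciSup (hBdd Xt) (⟨Xh, hXhbox, hXhcon⟩ : {X : Fin V → Fin n → ℝ //
            (∀ v i, X v i ∈ Set.Icc (-1 : ℝ) 1) ∧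
            ∀ v h, |(1 / (n : ℝ)) * (∑ i, E h i * X v i) - B v h| ≤ eps v})
    · -- sup at Xt0 is small
      apply ciSup_le
      intro X
      rw [obj_eq]
      have hperv : ∀ v, (1/(n:ℝ)) * ∑ i, MMX.ell (X.1 v i) (Xt0.1 v i)
          ≤ MMX.Phi (xs v) + e / (2 * V) := by
        intro v
        have he1 : ∀ i : Fin n, MMX.ell (X.1 v i) (Xt0.1 v i)
            = Psi (∑ h, w v h * E h i) / 2 - X.1 v i * (∑ h, w v h * E h i) / 2 := by
          intro i
          exact MMX.ell_th _ _
        rw [Finset.sum_congr rfl fun i _ => he1 i]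
        have he2 : (1/(n:ℝ)) * ∑ i, (Psi (∑ h, w v h * E h i) / 2
            - X.1 v i * (∑ h, w v h * E h i) / 2)
            = (1/(2*(n:ℝ))) * ∑ i, (Psi (∑ h, w v h * E h i)
              - (∑ h, w v h * E h i) * X.1 v i) := by
          rw [Finset.mul_sum, Finset.mul_sum]
          apply Finset.sum_congr rfl
          intro i _
          ring
        rw [he2]
        have h3 := MMX.weakA hn (hXfeas X v).2 (w v)
        have h4 := hw v
        calc (1/(2*(n:ℝ))) * ∑ i, (Psi (∑ h, w v h * E h i)
              - (∑ h, w v h * E h i) * X.1 v i)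
            ≤ MMX.fd E (B v) (eps v) (w v) / 2 := h3
          _ ≤ (2 * MMX.Phi (xs v) + 2 * (e / (2 * V))) / 2 := by linarith
          _ = MMX.Phi (xs v) + e / (2 * V) := by ring
      calc ∑ v, (1/(n:ℝ)) * ∑ i, MMX.ell (X.1 v i) (Xt0.1 v i)
          ≤ ∑ v, (MMX.Phi (xs v) + e / (2 * V)) := Finset.sum_le_sum fun v _ => hperv v
        _ = (∑ v, MMX.Phi (xs v)) + e / 2 := by
            rw [Finset.sum_add_distrib, Finset.sum_const, Finset.card_univ, Fintype.card_fin,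
              nsmul_eq_mul]
            congr 1
            field_simp
        _ ≤ (∑ v, MMX.Phi (xs v)) + e := by linarith
  · -- ∑ Phi xs ≤ LHS
    apply le_ciInf
    intro Xt
    set X0 : {X : Fin V → Fin n → ℝ //
        (∀ v i, X v i ∈ Set.Icc (-1 : ℝ) 1) ∧
        ∀ v h, |(1 / (n : ℝ)) * (∑ i, E h i * X v i) - B v h| ≤ eps v} :=
      ⟨fun v => xs v, fun v i => (hxsK v).1 i, fun v h => (hxsK v).2 h⟩ with hX0
    refine le_trans ?_ (le_ciSup (hBdd Xt) X0)
    rw [obj_eq]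
    apply Finset.sum_le_sum
    intro v _
    have h1 : MMX.Phi (xs v) = (1/(n:ℝ)) * ∑ i, MMX.S (xs v i) / 2 := by
      rw [MMX.Phi]
      rw [Finset.mul_sum, Finset.mul_sum]
      apply Finset.sum_congr rfl
      intro i _
      ring
    rw [h1]
    apply mul_le_mul_of_nonneg_left _ (by positivity)
    apply Finset.sum_le_sum
    intro i _
    exact MMX.gibbs ((hxsK v).1 i) (Xt.2 v i)
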